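/- Let (Ω, μ) be a probability space and X : Fin m → Ω → ℝ independent, identically distributed random variables (i.e., the family is independent and each X_i has the same distribution as X_0), with λ_min ≤ X_i(ω) ≤ λ_max for all i and ω; set Δ = λ_max − λ_min. Fix γ ≠ 0, δ ∈ (0,1), and ε > 0 with ε ≤ 1/|γ|. If m ≥ (2/(γ²·ε²))·(exp(|γ|·Δ) − 1)²·log(2/δ), then with probability at least 1 − δ the empirical tilted loss is ε-accurate: μ{ω : |(1/γ)·log((1/m)·Σ_{i} exp(γ·X_i(ω))) − (1/γ)·log(E[exp(γ·X_0)])| ≤ ε} ≥ 1 − δ. -/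

import Mathlib

open MeasureTheory ProbabilityTheory

lemma tilted_integrable_of_bdd {Ω : Type*} [MeasurableSpace Ω] {μ : Measure Ω} [IsFiniteMeasure μ]
    {f : Ω → ℝ} (hf : Measurable f) {C : ℝ} (h : ∀ ω, |f ω| ≤ C) : Integrable f μ :=
  Integrable.mono' (integrable_const C) hf.aestronglyMeasurable
    (Filter.Eventually.of_forall (fun ω => by simpa using h ω))

lemma tilted_mgf_le {Ω : Type*} [MeasurableSpace Ω] (μ : Measure Ω) [IsProbabilityMeasure μ]
    {Y : Ω → ℝ} (hY : Measurable Y) {R : ℝ} (hR : 0 < R)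
    (hb : ∀ ω, |Y ω| ≤ R) (h0 : ∫ ω, Y ω ∂μ = 0) (lam : ℝ) :
    mgf Y μ lam ≤ Real.exp (lam ^ 2 * R ^ 2 / 2) := by
  have hRne : R ≠ 0 := hR.ne'
  have hpt : ∀ y : ℝ, |y| ≤ R →
      Real.exp (lam * y) ≤ Real.cosh (lam * R) + (y / R) * Real.sinh (lam * R) := by
    intro y hy
    have hy1 : -R ≤ y := neg_le_of_abs_le hy
    have hy2 : y ≤ R := le_of_abs_le hy
    have ha : (0:ℝ) ≤ (R + y) / (2 * R) := div_nonneg (by linarith) (by positivity)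
    have hb' : (0:ℝ) ≤ (R - y) / (2 * R) := div_nonneg (by linarith) (by positivity)
    have hab : (R + y) / (2 * R) + (R - y) / (2 * R) = 1 := by field_simp; ring
    have h := convexOn_exp.2 (Set.mem_univ (lam * R)) (Set.mem_univ (-(lam * R))) ha hb' hab
    simp only [smul_eq_mul] at h
    have e1 : (R + y) / (2 * R) * (lam * R) + (R - y) / (2 * R) * -(lam * R) = lam * y := by
      field_simp; ring
    have e2 : (R + y) / (2 * R) * Real.exp (lam * R) + (R - y) / (2 * R) * Real.exp (-(lam * R))
        = Real.cosh (lam * R) + (y / R) * Real.sinh (lam * R) := by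
      rw [Real.cosh_eq, Real.sinh_eq]
      field_simp
      ring
    rw [e1, e2] at h
    exact h
  have hYint : Integrable Y μ := tilted_integrable_of_bdd hY hb
  have hint : Integrable (fun ω => Real.exp (lam * Y ω)) μ := by
    refine tilted_integrable_of_bdd ((hY.const_mul lam).exp) (C := Real.exp (|lam| * R)) ?_
    intro ω
    rw [abs_of_nonneg (Real.exp_pos _).le]
    apply Real.exp_le_exp.mpr
    calc lam * Y ω ≤ |lam * Y ω| := le_abs_self _
      _ = |lam| * |Y ω| := abs_mul _ _
      _ ≤ |lam| * R := by
          exact mul_le_mul_of_nonneg_left (hb ω) (abs_nonneg _)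
  have hRHSint : Integrable (fun ω => Real.cosh (lam * R) + (Y ω / R) * Real.sinh (lam * R)) μ :=
    (integrable_const _).add ((hYint.div_const R).mul_const _)
  have h1 : mgf Y μ lam ≤ ∫ ω, (Real.cosh (lam * R) + (Y ω / R) * Real.sinh (lam * R)) ∂μ := by
    refine integral_mono hint hRHSint (fun ω => hpt (Y ω) (hb ω))
  have h2 : ∫ ω, (Real.cosh (lam * R) + (Y ω / R) * Real.sinh (lam * R)) ∂μ
      = Real.cosh (lam * R) := by
    rw [integral_add (integrable_const _) ((hYint.div_const R).mul_const _)]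
    rw [integral_mul_const, integral_div, h0]
    simp
  have h3 : Real.cosh (lam * R) ≤ Real.exp ((lam * R) ^ 2 / 2) := Real.cosh_le_exp_half_sq _
  calc mgf Y μ lam ≤ Real.cosh (lam * R) := h2 ▸ h1
    _ ≤ Real.exp ((lam * R) ^ 2 / 2) := h3
    _ = Real.exp (lam ^ 2 * R ^ 2 / 2) := by ring_nf

lemma tilted_tail {Ω : Type*} [MeasurableSpace Ω] (μ : Measure Ω) [IsProbabilityMeasure μ]
    {m : ℕ} (Y : Fin m → Ω → ℝ) (hYm : ∀ i, Measurable (Y i))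
    (hindep : iIndepFun Y μ)
    {R : ℝ} (hR : 0 < R) (hb : ∀ i ω, |Y i ω| ≤ R) (h0 : ∀ i, ∫ ω, Y i ω ∂μ = 0)
    {t : ℝ} (ht : 0 < t) :
    (μ {ω | (m : ℝ) * t ≤ (∑ i, Y i) ω}).toReal
      ≤ Real.exp (-((m : ℝ) * t ^ 2 / (2 * R ^ 2))) := by
  set lam : ℝ := t / R ^ 2 with hlamdef
  have hlam : 0 ≤ lam := by positivity
  have hSm : Measurable (∑ i, Y i) := by
    rw [show (∑ i, Y i) = (fun ω => ∑ i, Y i ω) from by ext ω; simp]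
    exact Finset.measurable_sum _ (fun i _ => hYm i)
  have hint : Integrable (fun ω => Real.exp (lam * (∑ i, Y i) ω)) μ := by
    refine tilted_integrable_of_bdd ((hSm.const_mul lam).exp)
      (C := Real.exp (lam * ((m : ℝ) * R))) ?_
    intro ω
    rw [abs_of_nonneg (Real.exp_pos _).le]
    apply Real.exp_le_exp.mpr
    apply mul_le_mul_of_nonneg_left _ hlam
    calc (∑ i, Y i) ω = ∑ i, Y i ω := by simp
      _ ≤ ∑ i : Fin m, R := Finset.sum_le_sum (fun i _ => le_of_abs_le (hb i ω))
      _ = (m : ℝ) * R := by simp [mul_comm]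
  have hchern := measure_ge_le_exp_mul_mgf (μ := μ) (X := ∑ i, Y i) ((m : ℝ) * t) hlam hint
  have hmgf : mgf (∑ i, Y i) μ lam ≤ Real.exp ((m : ℝ) * (lam ^ 2 * R ^ 2 / 2)) := by
    rw [show (∑ i, Y i) = ∑ i ∈ Finset.univ, Y i from rfl, hindep.mgf_sum hYm]
    calc ∏ i : Fin m, mgf (Y i) μ lam
        ≤ ∏ _i : Fin m, Real.exp (lam ^ 2 * R ^ 2 / 2) := by
          apply Finset.prod_le_prod (fun i _ => mgf_nonneg)
          exact fun i _ => tilted_mgf_le μ (hYm i) hR (hb i) (h0 i) lam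
      _ = Real.exp (lam ^ 2 * R ^ 2 / 2) ^ m := by simp
      _ = Real.exp ((m : ℝ) * (lam ^ 2 * R ^ 2 / 2)) := (Real.exp_nat_mul _ m).symm
  calc (μ {ω | (m : ℝ) * t ≤ (∑ i, Y i) ω}).toReal
      ≤ Real.exp (-lam * ((m : ℝ) * t)) * mgf (∑ i, Y i) μ lam := hchern
    _ ≤ Real.exp (-lam * ((m : ℝ) * t)) * Real.exp ((m : ℝ) * (lam ^ 2 * R ^ 2 / 2)) := by
        exact mul_le_mul_of_nonneg_left hmgf (Real.exp_pos _).le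
    _ = Real.exp (-lam * ((m : ℝ) * t) + (m : ℝ) * (lam ^ 2 * R ^ 2 / 2)) :=
        (Real.exp_add _ _).symm
    _ = Real.exp (-((m : ℝ) * t ^ 2 / (2 * R ^ 2))) := by
        congr 1
        rw [hlamdef]
        field_simp
        ring

set_option maxHeartbeats 1000000 in
/-- **Hoeffding-type sample complexity for the empirical tilted loss.** Let `X i`,
`i : Fin m`, be i.i.d. random variables with values in `[λmin, λmax]`, `Δ = λmax − λmin`,
`γ ≠ 0`, `δ ∈ (0,1)`, and `0 < ε ≤ 1/|γ|`. If
`m ≥ (2/(γ²ε²))·(exp(|γ|Δ) − 1)²·log(2/δ)`, then with probability at least `1 − δ` the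
empirical tilted loss is within `ε` of the true tilted loss. -/
theorem empirical_tilted_loss_sample_complexity
    {Ω : Type*} [MeasurableSpace Ω] (μ : Measure Ω) [IsProbabilityMeasure μ]
    (m : ℕ) (hm0 : 0 < m) (X : Fin m → Ω → ℝ)
    (hmeas : ∀ i, Measurable (X i))
    (hindep : iIndepFun X μ)
    (hident : ∀ i, IdentDistrib (X i) (X ⟨0, hm0⟩) μ μ)
    (lammin lammax : ℝ)
    (hbound : ∀ i ω, X i ω ∈ Set.Icc lammin lammax)
    (γ : ℝ) (hγ : γ ≠ 0) (δ : ℝ) (hδ0 : 0 < δ) (hδ1 : δ < 1)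
    (ε : ℝ) (hε0 : 0 < ε) (hε : ε ≤ 1 / |γ|)
    (hsamples : (m : ℝ) ≥
      2 / (γ ^ 2 * ε ^ 2) * (Real.exp (|γ| * (lammax - lammin)) - 1) ^ 2 *
        Real.log (2 / δ)) :
    ENNReal.ofReal (1 - δ) ≤
      μ {ω | |(1 / γ) * Real.log ((1 / (m : ℝ)) * ∑ i, Real.exp (γ * X i ω))
          - (1 / γ) * Real.log (∫ ω', Real.exp (γ * X ⟨0, hm0⟩ ω') ∂μ)| ≤ ε} := by
  classical
  have hmpos : (0:ℝ) < m := Nat.cast_pos.mpr hm0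
  have hmne : (m:ℝ) ≠ 0 := ne_of_gt hmpos
  have hγabs : (0:ℝ) < |γ| := abs_pos.mpr hγ
  rcases lt_or_ge lammin lammax with hlt | hle
  swap
  · -- degenerate case : all X i ω = lammin
    have hconst : ∀ i ω, X i ω = lammin := fun i ω =>
      le_antisymm (le_trans (hbound i ω).2 hle) (hbound i ω).1
    have hA : (∫ ω', Real.exp (γ * X ⟨0, hm0⟩ ω') ∂μ) = Real.exp (γ * lammin) := by
      simp [hconst]
    have hset : {ω | |(1 / γ) * Real.log ((1 / (m : ℝ)) * ∑ i, Real.exp (γ * X i ω))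
          - (1 / γ) * Real.log (∫ ω', Real.exp (γ * X ⟨0, hm0⟩ ω') ∂μ)| ≤ ε} = Set.univ := by
      ext ω
      simp only [Set.mem_setOf_eq, Set.mem_univ, iff_true]
      rw [hA]
      have hsum : ∑ i, Real.exp (γ * X i ω) = (m : ℝ) * Real.exp (γ * lammin) := by
        simp [hconst, Finset.sum_const, Finset.card_univ, nsmul_eq_mul]
      rw [hsum]
      have h1 : (1 / (m:ℝ)) * ((m:ℝ) * Real.exp (γ * lammin)) = Real.exp (γ * lammin) := by
        field_simp
      rw [h1, sub_self, abs_zero]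
      exact hε0.le
    rw [hset]
    rw [measure_univ]
    exact ENNReal.ofReal_le_one.mpr (by linarith)
  -- main case
  set lo := min (γ * lammin) (γ * lammax) with hlodef
  set hi := max (γ * lammin) (γ * lammax) with hhidef
  have key : ∀ i ω, lo ≤ γ * X i ω ∧ γ * X i ω ≤ hi := by
    intro i ω
    obtain ⟨h1, h2⟩ := hbound i ω
    rcases le_total 0 γ with h | h
    · exact ⟨le_trans (min_le_left _ _) (by nlinarith),
        le_trans (by nlinarith) (le_max_right _ _)⟩
    · exact ⟨le_trans (min_le_right _ _) (by nlinarith),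
        le_trans (by nlinarith) (le_max_left _ _)⟩
  have hio : hi - lo = |γ| * (lammax - lammin) := by
    rcases le_total 0 γ with h | h
    · rw [hhidef, hlodef, abs_of_nonneg h, min_eq_left (by nlinarith),
        max_eq_right (by nlinarith)]
      ring
    · rw [hhidef, hlodef, abs_of_nonpos h, min_eq_right (by nlinarith),
        max_eq_left (by nlinarith)]
      ring
  set a := Real.exp lo with hadef
  set b := Real.exp hi with hbdef
  have ha0 : 0 < a := Real.exp_pos _
  set Efac := Real.exp (|γ| * (lammax - lammin)) with hEdef
  have hE1 : 1 < Efac := by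
    rw [hEdef]
    exact Real.one_lt_exp_iff.mpr (mul_pos (abs_pos.mpr hγ) (by linarith))
  have hba : b = a * Efac := by
    rw [hbdef, hadef, hEdef, ← hio, ← Real.exp_add]
    ring_nf
  set R := b - a with hRdef
  have hRa : R = a * (Efac - 1) := by rw [hRdef, hba]; ring
  have hR : 0 < R := by rw [hRa]; exact mul_pos ha0 (by linarith)
  have hexpmem : ∀ i ω, a ≤ Real.exp (γ * X i ω) ∧ Real.exp (γ * X i ω) ≤ b := fun i ω =>
    ⟨Real.exp_le_exp.mpr (key i ω).1, Real.exp_le_exp.mpr (key i ω).2⟩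
  have hint_i : ∀ i, Integrable (fun ω => Real.exp (γ * X i ω)) μ := by
    intro i
    refine tilted_integrable_of_bdd ((hmeas i).const_mul γ).exp (C := b) ?_
    intro ω
    rw [abs_of_nonneg (Real.exp_pos _).le]
    exact (hexpmem i ω).2
  set A := ∫ ω', Real.exp (γ * X ⟨0, hm0⟩ ω') ∂μ with hAdef
  have hAmem : a ≤ A ∧ A ≤ b := by
    constructor
    · calc a = ∫ _ω, a ∂μ := by simp
        _ ≤ A := by
            rw [hAdef]
            exact integral_mono (integrable_const a) (hint_i _) (fun ω => (hexpmem _ ω).1)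
    · calc A ≤ ∫ _ω, b ∂μ := by
            rw [hAdef]
            exact integral_mono (hint_i _) (integrable_const b) (fun ω => (hexpmem _ ω).2)
        _ = b := by simp
  set Y : Fin m → Ω → ℝ := fun i ω => Real.exp (γ * X i ω) - A with hYdef
  have hYmeas : ∀ i, Measurable (Y i) := fun i =>
    (((hmeas i).const_mul γ).exp).sub measurable_const
  have hYindep : iIndepFun Y μ :=
    hindep.comp (fun _ x => Real.exp (γ * x) - A)
      (fun _ => (Real.measurable_exp.comp (measurable_id.const_mul γ)).sub measurable_const)
  have hYb : ∀ i ω, |Y i ω| ≤ R := by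
    intro i ω
    rw [abs_le]
    obtain ⟨h1, h2⟩ := hexpmem i ω
    constructor
    · simp only [hYdef, hRdef]; linarith [hAmem.2]
    · simp only [hYdef, hRdef]; linarith [hAmem.1]
  have hY0 : ∀ i, ∫ ω, Y i ω ∂μ = 0 := by
    intro i
    have hid : ∫ ω, Real.exp (γ * X i ω) ∂μ = A := by
      rw [hAdef]
      exact ((hident i).comp
        (Real.measurable_exp.comp (measurable_id.const_mul γ))).integral_eq
    simp only [hYdef]
    rw [integral_sub (hint_i i) (integrable_const A), hid, integral_const]
    simp
  set t := |γ| * ε * a with htdef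
  have ht : 0 < t := by positivity
  set Z : Fin m → Ω → ℝ := fun i => -(Y i) with hZdef
  have hZmeas : ∀ i, Measurable (Z i) := fun i => (hYmeas i).neg
  have hZindep : iIndepFun Z μ :=
    hYindep.comp (fun _ x => -x) (fun _ => measurable_neg)
  have hZb : ∀ i ω, |Z i ω| ≤ R := by
    intro i ω
    simp only [hZdef, Pi.neg_apply, abs_neg]
    exact hYb i ω
  have hZ0 : ∀ i, ∫ ω, Z i ω ∂μ = 0 := by
    intro i
    simp only [hZdef, Pi.neg_apply]
    rw [integral_neg, hY0 i, neg_zero]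
  have h1 := tilted_tail μ Y hYmeas hYindep hR hYb hY0 ht
  have h2 := tilted_tail μ Z hZmeas hZindep hR hZb hZ0 ht
  set q := Real.exp (-((m : ℝ) * t ^ 2 / (2 * R ^ 2))) with hqdef
  have hq0 : 0 < q := Real.exp_pos _
  -- arithmetic : q ≤ δ / 2
  have hγ2 : (0:ℝ) < γ ^ 2 := by rw [← sq_abs]; exact pow_pos hγabs 2
  have hlog : 0 < Real.log (2 / δ) := Real.log_pos (by rw [lt_div_iff₀ hδ0]; linarith)
  have hE1' : (0:ℝ) < Efac - 1 := by linarith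
  have hm' : 2 * (Efac - 1) ^ 2 * Real.log (2 / δ) ≤ (m : ℝ) * (γ ^ 2 * ε ^ 2) := by
    have h := mul_le_mul_of_nonneg_right hsamples
      (show (0:ℝ) ≤ γ ^ 2 * ε ^ 2 from le_of_lt (by positivity))
    calc 2 * (Efac - 1) ^ 2 * Real.log (2 / δ)
        = 2 / (γ ^ 2 * ε ^ 2) * (Efac - 1) ^ 2 * Real.log (2 / δ) * (γ ^ 2 * ε ^ 2) := by
          field_simp
      _ ≤ (m : ℝ) * (γ ^ 2 * ε ^ 2) := h
  have hexp : Real.log (2 / δ) ≤ (m : ℝ) * t ^ 2 / (2 * R ^ 2) := by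
    have ht2 : t ^ 2 = γ ^ 2 * ε ^ 2 * a ^ 2 := by
      rw [htdef, mul_pow, mul_pow, sq_abs]
    have hR2 : R ^ 2 = a ^ 2 * (Efac - 1) ^ 2 := by rw [hRa, mul_pow]
    rw [le_div_iff₀ (mul_pos two_pos (pow_pos hR 2))]
    rw [ht2, hR2]
    nlinarith [mul_le_mul_of_nonneg_right hm' (le_of_lt (pow_pos ha0 2))]
  have hq : q ≤ δ / 2 := by
    rw [hqdef]
    calc Real.exp (-((m : ℝ) * t ^ 2 / (2 * R ^ 2)))
        ≤ Real.exp (-(Real.log (2 / δ))) := Real.exp_le_exp.mpr (by linarith)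
      _ = δ / 2 := by
          rw [Real.exp_neg, Real.exp_log (by positivity)]
          rw [inv_div]
  -- deterministic step
  have hdet : ∀ ω, |∑ i, Y i ω| ≤ (m : ℝ) * t →
      |(1 / γ) * Real.log ((1 / (m : ℝ)) * ∑ i, Real.exp (γ * X i ω))
        - (1 / γ) * Real.log A| ≤ ε := by
    intro ω hS
    set S := ∑ i, Real.exp (γ * X i ω) with hSdef
    have hsum : ∑ i, Y i ω = S - (m : ℝ) * A := by
      simp only [hYdef, hSdef]
      rw [Finset.sum_sub_distrib, Finset.sum_const, Finset.card_univ, Fintype.card_fin,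
        nsmul_eq_mul]
    set x := (1 / (m : ℝ)) * S with hxdef
    have hax : a ≤ x := by
      have hSa : (m : ℝ) * a ≤ S := by
        rw [hSdef]
        calc (m : ℝ) * a = ∑ _i : Fin m, a := by
              rw [Finset.sum_const, Finset.card_univ, Fintype.card_fin, nsmul_eq_mul]
          _ ≤ ∑ i, Real.exp (γ * X i ω) :=
              Finset.sum_le_sum (fun i _ => (hexpmem i ω).1)
      rw [hxdef]
      calc a = (1 / (m : ℝ)) * ((m : ℝ) * a) := by field_simp
        _ ≤ (1 / (m : ℝ)) * S := by
            exact mul_le_mul_of_nonneg_left hSa (by positivity)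
    have hdiff : |x - A| ≤ t := by
      have hxA : x - A = (1 / (m : ℝ)) * (∑ i, Y i ω) := by
        rw [hsum, hxdef]
        field_simp
      rw [hxA, abs_mul, abs_of_nonneg (by positivity : (0:ℝ) ≤ 1 / (m : ℝ))]
      calc (1 / (m : ℝ)) * |∑ i, Y i ω| ≤ (1 / (m : ℝ)) * ((m : ℝ) * t) :=
            mul_le_mul_of_nonneg_left hS (by positivity)
        _ = t := by field_simp
    have haux : ∀ u v : ℝ, a ≤ u → a ≤ v → u - v ≤ t →
        Real.log u - Real.log v ≤ |γ| * ε := by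
      intro u v hu hv huv
      have hu0 : 0 < u := lt_of_lt_of_le ha0 hu
      have hv0 : 0 < v := lt_of_lt_of_le ha0 hv
      have hld := Real.log_le_sub_one_of_pos (div_pos hu0 hv0)
      rw [Real.log_div hu0.ne' hv0.ne'] at hld
      have h2 : u / v - 1 = (u - v) / v := by field_simp
      have h3 : (u - v) / v ≤ t / a := by
        rcases le_or_gt (u - v) 0 with hneg | hpos
        · calc (u - v) / v ≤ 0 := div_nonpos_of_nonpos_of_nonneg hneg hv0.le
            _ ≤ t / a := by positivity
        · exact div_le_div₀ ht.le huv ha0 hv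
      have h4 : t / a = |γ| * ε := by rw [htdef]; field_simp
      linarith
    have hlogd : |Real.log x - Real.log A| ≤ |γ| * ε := by
      rw [abs_sub_le_iff]
      rw [abs_le] at hdiff
      exact ⟨haux x A hax hAmem.1 (by linarith),
        haux A x hAmem.1 hax (by linarith)⟩
    have hfinal : (1 / γ) * Real.log x - (1 / γ) * Real.log A
        = (1 / γ) * (Real.log x - Real.log A) := by ring
    rw [← hxdef] at *
    rw [hfinal, abs_mul, abs_div, abs_one]
    calc 1 / |γ| * |Real.log x - Real.log A| ≤ 1 / |γ| * (|γ| * ε) :=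
          mul_le_mul_of_nonneg_left hlogd (by positivity)
      _ = ε := by field_simp
  -- measure bookkeeping
  set U1 := {ω | (m : ℝ) * t ≤ (∑ i, Y i) ω} with hU1def
  set U2 := {ω | (m : ℝ) * t ≤ (∑ i, Z i) ω} with hU2def
  set E := {ω | |(1 / γ) * Real.log ((1 / (m : ℝ)) * ∑ i, Real.exp (γ * X i ω))
      - (1 / γ) * Real.log A| ≤ ε} with hEdef2
  have hsummeas : Measurable (fun ω => ∑ i, Real.exp (γ * X i ω)) :=
    Finset.measurable_sum _ (fun i _ => ((hmeas i).const_mul γ).exp)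
  have hEmeas : MeasurableSet E := by
    rw [hEdef2]
    exact measurableSet_le
      ((((Real.measurable_log.comp (hsummeas.const_mul (1 / (m:ℝ)))).const_mul
        (1 / γ)).sub measurable_const).abs) measurable_const
  have hsub : Eᶜ ⊆ U1 ∪ U2 := by
    intro ω hω
    by_contra hn
    simp only [hU1def, hU2def, Set.mem_union, Set.mem_setOf_eq, not_or, not_le] at hn
    apply hω
    rw [hEdef2]
    simp only [Set.mem_setOf_eq]
    apply hdet
    obtain ⟨hn1, hn2⟩ := hn
    rw [Finset.sum_apply] at hn1 hn2
    have hn2' : -(∑ i, Y i ω) < (m : ℝ) * t := by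
      have hZY : ∑ i, Z i ω = -(∑ i, Y i ω) := by
        simp [hZdef, Finset.sum_neg_distrib]
      rw [hZY] at hn2
      exact hn2
    rw [abs_le]
    constructor <;> linarith
  have hU1le : μ U1 ≤ ENNReal.ofReal q := by
    rw [ENNReal.le_ofReal_iff_toReal_le (measure_ne_top μ _) hq0.le]
    exact h1
  have hU2le : μ U2 ≤ ENNReal.ofReal q := by
    rw [ENNReal.le_ofReal_iff_toReal_le (measure_ne_top μ _) hq0.le]
    exact h2
  have hcompl : μ Eᶜ ≤ ENNReal.ofReal δ := by
    calc μ Eᶜ ≤ μ (U1 ∪ U2) := measure_mono hsub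
      _ ≤ μ U1 + μ U2 := measure_union_le _ _
      _ ≤ ENNReal.ofReal q + ENNReal.ofReal q := add_le_add hU1le hU2le
      _ = ENNReal.ofReal (q + q) := (ENNReal.ofReal_add hq0.le hq0.le).symm
      _ ≤ ENNReal.ofReal δ := ENNReal.ofReal_le_ofReal (by linarith)
  calc ENNReal.ofReal (1 - δ) = 1 - ENNReal.ofReal δ := by
        rw [← ENNReal.ofReal_one, ← ENNReal.ofReal_sub _ hδ0.le]
    _ ≤ 1 - μ Eᶜ := tsub_le_tsub_left hcompl 1
    _ = μ E := by rw [← prob_compl_eq_one_sub hEmeas.compl, compl_compl]
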